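/- Let K be an algebraically closed field, n ≥ 1, U := K^n, and M a submonoid of the multiplicative monoid End_K(U) (equivalently, of n×n matrices over K) whose underlying set is Zariski closed, i.e., the common zero locus of a set of polynomials in the matrix entries. Let P := K² be a 2-dimensional K-vector space. Then there exists an integer r > 1 and a linear subspace S of the r-th tensor power (P ⊕ U)^{⊗r} such that {g ∈ End_K(U) | (id_P ⊕ g)^{⊗r}(S) ⊆ S} = M. -/

import Mathlib

open scoped TensorProduct

namespace ZCT

variable {K : Type*} [Field K] {n : ℕ}

/-- Evaluation of a polynomial at (the matrix of) an endomorphism. -/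
noncomputable def ev (g : Module.End K (Fin n → K)) :
    MvPolynomial (Fin n × Fin n) K →+* K :=
  MvPolynomial.eval (fun ij => LinearMap.toMatrix' g ij.1 ij.2)

lemma ev_eval (g : Module.End K (Fin n → K)) (p : MvPolynomial (Fin n × Fin n) K) :
    ev g p = MvPolynomial.eval (fun ij => LinearMap.toMatrix' g ij.1 ij.2) p := rfl

/-- The substitution `x_{ij} ↦ ∑ₖ x_{ik} g_{kj}`, i.e. `f ↦ f(· g)`. -/
noncomputable def sigma (g : Module.End K (Fin n → K)) :
    MvPolynomial (Fin n × Fin n) K →ₐ[K] MvPolynomial (Fin n × Fin n) K :=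
  MvPolynomial.aeval fun ij =>
    ∑ k, MvPolynomial.X (ij.1, k) * MvPolynomial.C (LinearMap.toMatrix' g k ij.2)

lemma ev_sigma (h g : Module.End K (Fin n → K)) (f : MvPolynomial (Fin n × Fin n) K) :
    ev h (sigma g f) = ev (h * g) f := by
  have : (ev h).comp (sigma g).toRingHom = ev (h * g) := by
    apply MvPolynomial.ringHom_ext
    · intro c
      simp [ev, sigma]
    · intro ij
      have hmul : LinearMap.toMatrix' (h * g) ij.1 ij.2 =
          ∑ k, LinearMap.toMatrix' h ij.1 k * LinearMap.toMatrix' g k ij.2 := by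
        rw [Module.End.mul_eq_comp, LinearMap.toMatrix'_comp, Matrix.mul_apply]
      simp only [RingHom.coe_comp, Function.comp_apply, AlgHom.toRingHom_eq_coe,
        AlgHom.coe_toRingHom, sigma, MvPolynomial.aeval_X, ev, map_sum, map_mul,
        MvPolynomial.eval_X, MvPolynomial.eval_C, hmul]
  exact DFunLike.congr_fun this f

/-- Per-slot linear map into polynomials, with fixed row `i`. -/
noncomputable def psi (i : Fin n) :
    ((Fin 2 → K) × (Fin n → K)) →ₗ[K] MvPolynomial (Fin n × Fin n) K where
  toFun v := v.1 0 • 1 + ∑ j, v.2 j • MvPolynomial.X (i, j)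
  map_add' v w := by
    simp only [Prod.fst_add, Pi.add_apply, add_smul, Prod.snd_add, Finset.sum_add_distrib]
    ring
  map_smul' c v := by
    simp only [Prod.smul_fst, Pi.smul_apply, smul_eq_mul, Prod.smul_snd, RingHom.id_apply,
      smul_add, Finset.smul_sum, smul_smul]

lemma psi_equivariant (i : Fin n) (g : Module.End K (Fin n → K))
    (v : (Fin 2 → K) × (Fin n → K)) :
    psi i ((LinearMap.id.prodMap g) v) = sigma g (psi i v) := by
  have hv : v.2 = ∑ x, v.2 x • (fun j' => if j' = x then (1:K) else 0) := by
    funext j'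
    simp [Finset.sum_apply, Finset.sum_ite_eq]
  have hg : ∀ j : Fin n, g v.2 j = ∑ k, LinearMap.toMatrix' g j k * v.2 k := by
    intro j
    conv_lhs => rw [hv, map_sum]
    simp only [map_smul, Finset.sum_apply, Pi.smul_apply, smul_eq_mul,
      LinearMap.toMatrix'_apply]
    exact Finset.sum_congr rfl fun x _ => by
      have e : (fun j' => if j' = x then (1:K) else 0) = Pi.single x 1 := by
        funext j'; simp [Pi.single_apply]
      rw [e, mul_comm]
  simp only [psi, LinearMap.prodMap_apply, LinearMap.id_coe, id_eq, LinearMap.coe_mk,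
    AddHom.coe_mk, sigma, map_add, map_smul, map_one, map_sum, MvPolynomial.aeval_X, hg]
  congr 1
  have hR : ∀ x, v.2 x • ∑ y, MvPolynomial.X (i, y) *
      MvPolynomial.C (LinearMap.toMatrix' g y x) =
      ∑ y, (LinearMap.toMatrix' g y x * v.2 x) • MvPolynomial.X (i, y) := by
    intro x
    rw [Finset.smul_sum]
    exact Finset.sum_congr rfl fun y _ => by
      rw [mul_comm, MvPolynomial.C_mul', smul_smul, mul_comm]
  simp only [hR]
  rw [Finset.sum_comm]
  exact Finset.sum_congr rfl fun y _ => Finset.sum_smul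

def cvec : (Fin 2 → K) × (Fin n → K) := (Pi.single 0 1, 0)

def xvec (j : Fin n) : (Fin 2 → K) × (Fin n → K) := (0, Pi.single j 1)

lemma psi_cvec (i : Fin n) : psi i (cvec : (Fin 2 → K) × (Fin n → K)) = 1 := by
  simp [psi, cvec]

lemma psi_xvec (i j : Fin n) :
    psi i (xvec j : (Fin 2 → K) × (Fin n → K)) = MvPolynomial.X (i, j) := by
  simp [psi, xvec, Pi.single_apply, ite_smul, Finset.sum_ite_eq]

lemma psi_opt (i : Fin n) (o : Option (Fin n)) :
    psi i ((o.map (xvec : Fin n → (Fin 2 → K) × (Fin n → K))).getD cvec)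
      = ((o.map fun j => (MvPolynomial.X (i, j) : MvPolynomial (Fin n × Fin n) K)).getD 1) := by
  cases o <;> simp [psi_cvec, psi_xvec]

def slotEquiv (n d : ℕ) : (Fin n × Fin d) ⊕ Fin 2 ≃ Fin (n * d + 2) :=
  (Equiv.sumCongr finProdFinEquiv (Equiv.refl _)).trans finSumFinEquiv

def rowOf (hn : 0 < n) (d : ℕ) : Fin (n * d + 2) → Fin n := fun s =>
  Sum.elim Prod.fst (fun _ => ⟨0, hn⟩) ((slotEquiv n d).symm s)

noncomputable def piMap {r : ℕ} (ρ : Fin r → Fin n) :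
    (⨂[K]^r ((Fin 2 → K) × (Fin n → K))) →ₗ[K] MvPolynomial (Fin n × Fin n) K :=
  PiTensorProduct.lift
    ((MultilinearMap.mkPiAlgebra K (Fin r) (MvPolynomial (Fin n × Fin n) K)).compLinearMap
      fun s => psi (ρ s))

lemma piMap_tprod {r : ℕ} (ρ : Fin r → Fin n) (v : Fin r → (Fin 2 → K) × (Fin n → K)) :
    piMap ρ (PiTensorProduct.tprod K v) = ∏ s, psi (ρ s) (v s) := by
  simp [piMap]

lemma piMap_equivariant {r : ℕ} (ρ : Fin r → Fin n) (g : Module.End K (Fin n → K))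
    (w : ⨂[K]^r ((Fin 2 → K) × (Fin n → K))) :
    piMap ρ (PiTensorProduct.map (fun _ : Fin r => (LinearMap.id.prodMap g)) w) =
      sigma g (piMap ρ w) := by
  have : (piMap ρ).comp (PiTensorProduct.map (fun _ : Fin r => (LinearMap.id.prodMap g)))
      = ((sigma g).toLinearMap).comp (piMap ρ) := by
    apply PiTensorProduct.ext
    apply MultilinearMap.ext
    intro v
    simp only [LinearMap.compMultilinearMap_apply, LinearMap.coe_comp, Function.comp_apply,
      PiTensorProduct.map_tprod, piMap_tprod, AlgHom.toLinearMap_apply, map_prod]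
    exact Finset.prod_congr rfl fun s _ => psi_equivariant (ρ s) g (v s)
  exact DFunLike.congr_fun this w

lemma prod_fin_getElem {α M : Type*} [CommMonoid M] (f : α → M) :
    ∀ (d : ℕ) (l : List α), l.length ≤ d →
    (∏ t : Fin d, ((l[(t : ℕ)]?).map f).getD 1) = (l.map f).prod := by
  intro d
  induction d with
  | zero =>
    intro l hl
    have : l = [] := List.length_eq_zero_iff.mp (Nat.le_zero.mp hl)
    subst this
    simp
  | succ d ih =>
    intro l hl
    cases l with
    | nil => simp
    | cons a l' =>
      rw [Fin.prod_univ_succ]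
      simp only [Fin.val_zero, List.getElem?_cons_zero, Option.map_some, Option.getD_some,
        Fin.val_succ, List.getElem?_cons_succ, List.map_cons, List.prod_cons]
      rw [ih l' (by simpa using Nat.succ_le_succ_iff.mp (by simpa using hl))]

lemma prod_filterMap {n : ℕ} {M : Type*} [CommMonoid M] (f : Fin n × Fin n → M) :
    ∀ l : List (Fin n × Fin n),
    (∏ i : Fin n,
      ((l.filterMap fun p => if p.1 = i then some p.2 else none).map fun j => f (i, j)).prod)
      = (l.map f).prod := by
  intro l
  induction l with
  | nil => simp
  | cons p l ih =>
    have step : ∀ i : Fin n,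
        (((p :: l).filterMap fun q => if q.1 = i then some q.2 else none).map
            fun j => f (i, j)).prod =
        (if p.1 = i then f p else 1) *
          ((l.filterMap fun q => if q.1 = i then some q.2 else none).map
            fun j => f (i, j)).prod := by
      intro i
      by_cases h : p.1 = i
      · subst h
        rw [List.filterMap_cons]
        simp
      · rw [List.filterMap_cons]
        simp [h]
    simp only [step]
    rw [Finset.prod_mul_distrib, Finset.prod_ite_eq]
    simp [ih]

lemma prod_toList_eq_monomial (u : (Fin n × Fin n) →₀ ℕ) :
    ((u.toMultiset.toList).map
        (MvPolynomial.X : Fin n × Fin n → MvPolynomial (Fin n × Fin n) K)).prod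
      = MvPolynomial.monomial u 1 := by
  have h1 : ((u.toMultiset.toList).map
      (MvPolynomial.X : Fin n × Fin n → MvPolynomial (Fin n × Fin n) K)).prod
      = (u.toMultiset.map
          (MvPolynomial.X : Fin n × Fin n → MvPolynomial (Fin n × Fin n) K)).prod := by
    conv_rhs => rw [← Multiset.coe_toList u.toMultiset]
    rw [Multiset.map_coe, Multiset.prod_coe]
  rw [h1, MvPolynomial.monomial_eq, MvPolynomial.C_1, one_mul]
  rw [Finsupp.toMultiset_map, Finsupp.prod_toMultiset]
  rw [Finsupp.prod_mapDomain_index (by intro b; exact pow_zero b)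
    (by intro b m₁ m₂; exact pow_add b m₁ m₂)]

lemma toList_length (u : (Fin n × Fin n) →₀ ℕ) :
    u.toMultiset.toList.length = u.sum fun _ e => e := by
  rw [Multiset.length_toList, Finsupp.card_toMultiset]
  rfl

lemma monomial_mem_range (hn : 0 < n) (d : ℕ) (u : (Fin n × Fin n) →₀ ℕ)
    (hu : (u.sum fun _ e => e) ≤ d) (c : K) :
    MvPolynomial.monomial u c ∈ LinearMap.range (piMap (K := K) (rowOf hn d)) := by
  classical
  set l : List (Fin n × Fin n) := u.toMultiset.toList with hl
  set Li : Fin n → List (Fin n) :=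
    fun i => l.filterMap fun p => if p.1 = i then some p.2 else none with hLi
  set v : Fin (n * d + 2) → (Fin 2 → K) × (Fin n → K) := fun s =>
    Sum.elim (fun p : Fin n × Fin d => (((Li p.1)[(p.2 : ℕ)]?).map xvec).getD cvec)
      (fun _ => cvec) ((slotEquiv n d).symm s) with hv
  refine ⟨c • PiTensorProduct.tprod K v, ?_⟩
  rw [map_smul, piMap_tprod]
  have hprod : (∏ s, psi (rowOf hn d s) (v s)) = MvPolynomial.monomial u 1 := by
    rw [← Equiv.prod_comp (slotEquiv n d) (fun s => psi (rowOf hn d s) (v s))]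
    have hterm : ∀ x : (Fin n × Fin d) ⊕ Fin 2,
        psi (rowOf hn d (slotEquiv n d x)) (v (slotEquiv n d x)) =
        Sum.elim (fun p : Fin n × Fin d =>
          ((((Li p.1)[(p.2 : ℕ)]?).map fun j =>
            (MvPolynomial.X (p.1, j) : MvPolynomial (Fin n × Fin n) K)).getD 1))
          (fun _ => 1) x := by
      intro x
      have hsymm : (slotEquiv n d).symm (slotEquiv n d x) = x := Equiv.symm_apply_apply _ _
      cases x with
      | inl p =>
        simp only [hv, rowOf, hsymm, Sum.elim_inl]
        exact psi_opt p.1 _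
      | inr t =>
        simp only [hv, rowOf, hsymm, Sum.elim_inr]
        exact psi_cvec _
    rw [Finset.prod_congr rfl fun x _ => hterm x]
    rw [Fintype.prod_sum_type]
    simp only [Sum.elim_inl, Sum.elim_inr, Finset.prod_const_one, mul_one]
    rw [Fintype.prod_prod_type]
    have hinner : ∀ i : Fin n,
        (∏ t : Fin d, (((Li i)[(t : ℕ)]?).map fun j =>
          (MvPolynomial.X (i, j) : MvPolynomial (Fin n × Fin n) K)).getD 1)
        = ((Li i).map fun j => (MvPolynomial.X (i, j) : MvPolynomial (Fin n × Fin n) K)).prod := by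
      intro i
      apply prod_fin_getElem
      calc (Li i).length ≤ l.length := List.length_filterMap_le _ _
        _ ≤ d := by rw [hl, toList_length]; exact hu
    rw [Finset.prod_congr rfl fun i _ => hinner i]
    rw [prod_filterMap, prod_toList_eq_monomial]
  rw [hprod, MvPolynomial.smul_monomial, smul_eq_mul, mul_one]

lemma mem_range_of_totalDegree_le (hn : 0 < n) (d : ℕ) (f : MvPolynomial (Fin n × Fin n) K)
    (hf : f.totalDegree ≤ d) : f ∈ LinearMap.range (piMap (K := K) (rowOf hn d)) := by
  rw [f.as_sum]
  apply Submodule.sum_mem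
  intro u hu
  exact monomial_mem_range hn d u (le_trans (MvPolynomial.le_totalDegree hu) hf) _

end ZCT

/-- For any Zariski closed submonoid `M` of `End_K(U)` (`U = K^n`), there are an integer `r > 1`
and a subspace `S` of the tensor power `(P ⊕ U)^{⊗r}` (`P = K²`) such that the normalizer
`{g ∈ End_K(U) | (id_P ⊕ g)^{⊗r}(S) ⊆ S}` is exactly `M`. -/
theorem zariski_closed_submonoid_as_tensor_normalizer
    (K : Type*) [Field K] [IsAlgClosed K] (n : ℕ) (hn : 1 ≤ n)
    (M : Submonoid (Module.End K (Fin n → K)))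
    (hM : ∃ P : Set (MvPolynomial (Fin n × Fin n) K),
      (M : Set (Module.End K (Fin n → K))) =
        {g | ∀ p ∈ P,
          MvPolynomial.eval (fun ij => LinearMap.toMatrix' g ij.1 ij.2) p = 0}) :
    ∃ r : ℕ, 1 < r ∧
      ∃ S : Submodule K (⨂[K]^r ((Fin 2 → K) × (Fin n → K))),
        {g : Module.End K (Fin n → K) |
            ∀ s ∈ S,
              PiTensorProduct.map
                (fun _ : Fin r =>
                  ((LinearMap.id : (Fin 2 → K) →ₗ[K] (Fin 2 → K)).prodMap g)) s ∈ S} =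
          (M : Set (Module.End K (Fin n → K))) := by
  classical
  obtain ⟨P, hP⟩ := hM
  -- the vanishing ideal of M
  let J : Ideal (MvPolynomial (Fin n × Fin n) K) :=
    { carrier := {f | ∀ m ∈ M, ZCT.ev m f = 0}
      add_mem' := fun hf hg m hm => by rw [map_add, hf m hm, hg m hm, add_zero]
      zero_mem' := fun m _ => map_zero _
      smul_mem' := fun c f hf m hm => by rw [smul_eq_mul, map_mul, hf m hm, mul_zero] }
  have hJmem : ∀ f, f ∈ J ↔ ∀ m ∈ M, ZCT.ev m f = 0 := fun f => Iff.rfl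
  obtain ⟨T, hT⟩ := IsNoetherian.noetherian J
  set d := T.sup fun f => f.totalDegree with hd
  have hn0 : 0 < n := hn
  refine ⟨n * d + 2, by omega, ?_⟩
  set ρ := ZCT.rowOf hn0 d with hρ
  set π := ZCT.piMap (K := K) ρ with hπ
  refine ⟨(Submodule.restrictScalars K (J : Submodule _ _)).comap π, ?_⟩
  ext g
  simp only [Set.mem_setOf_eq, SetLike.mem_coe, Submodule.mem_comap,
    Submodule.restrictScalars_mem]
  constructor
  · intro hstab
    have hTker : ∀ f ∈ T, ZCT.ev g f = 0 := by
      intro f hf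
      have hfJ : f ∈ J := by rw [← hT]; exact Ideal.subset_span hf
      have hdeg : f.totalDegree ≤ d := Finset.le_sup hf
      obtain ⟨w, hw⟩ := ZCT.mem_range_of_totalDegree_le hn0 d f hdeg
      have hwS : π w ∈ J := by rw [hw]; exact hfJ
      have hmoved := hstab w hwS
      have hsig : ZCT.sigma g f ∈ J := by
        rw [← hw, ← ZCT.piMap_equivariant]
        exact hmoved
      have h1 : ZCT.ev 1 (ZCT.sigma g f) = 0 := hsig 1 M.one_mem
      rwa [ZCT.ev_sigma, one_mul] at h1
    have hker : J ≤ RingHom.ker (ZCT.ev g) := by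
      rw [← hT, show (Submodule.span (MvPolynomial (Fin n × Fin n) K) (↑T : Set _)) =
        Ideal.span (↑T : Set _) from rfl, Ideal.span_le]
      intro f hf
      exact hTker f hf
    have hgM : ∀ p ∈ P, ZCT.ev g p = 0 := by
      intro p hp
      have hpJ : p ∈ J := by
        intro m hm
        have hmem : m ∈ (M : Set (Module.End K (Fin n → K))) := hm
        rw [hP] at hmem
        rw [ZCT.ev_eval]
        exact hmem p hp
      exact hker hpJ
    have : g ∈ (M : Set (Module.End K (Fin n → K))) := by
      rw [hP]
      intro p hp
      rw [← ZCT.ev_eval]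
      exact hgM p hp
    exact this
  · intro hgM s hs
    rw [ZCT.piMap_equivariant]
    intro m hm
    rw [ZCT.ev_sigma]
    exact hs (m * g) (M.mul_mem hm hgM)
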